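/- arXiv:1810.10390 — 2 statements merged into one kernel-verified Lean document; each statement's English description precedes it below -/
import Mathlib

section
/- Let h > 0 and let β be a nonzero real number with cos(hβ) ≠ 1. Define a = β·sin(hβ)/(1 − cos(hβ)) and b = −β²·cos(hβ)/(1 − cos(hβ)). Then ω = iβ is a root of the characteristic equation, i.e., iβ + a·e^{−i h β} + (b/(iβ))·(1 − e^{−i h β}) = 0, where e denotes the complex exponential. -/
open Complex in
theorem imaginary_root_of_characteristic_equation
    (h β : ℝ) (hh : 0 < h) (hβ : β ≠ 0) (hcos : Real.cos (h * β) ≠ 1)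
    (a b : ℝ)
    (ha : a = β * Real.sin (h * β) / (1 - Real.cos (h * β)))
    (hb : b = -(β ^ 2 * Real.cos (h * β)) / (1 - Real.cos (h * β))) :
    I * (β : ℂ) + (a : ℂ) * Complex.exp (-(h : ℂ) * (I * (β : ℂ)))
      + ((b : ℂ) / (I * (β : ℂ))) * (1 - Complex.exp (-(h : ℂ) * (I * (β : ℂ)))) = 0 := by
  have hexp : Complex.exp (-(h : ℂ) * (I * (β : ℂ)))
      = (Real.cos (h * β) : ℂ) - (Real.sin (h * β) : ℂ) * I := by
    have : -(h : ℂ) * (I * (β : ℂ)) = ((-(h * β) : ℝ) : ℂ) * I := by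
      push_cast; ring
    rw [this, Complex.exp_mul_I]
    push_cast
    rw [Complex.cos_neg, Complex.sin_neg]
    ring
  have hc : (1 : ℂ) - (Real.cos (h * β) : ℂ) ≠ 0 := by
    intro H
    apply hcos
    have := sub_eq_zero.mp H
    exact_mod_cast this.symm
  have hβc : (β : ℂ) ≠ 0 := by exact_mod_cast hβ
  have hpyth : (Real.sin (h * β) : ℂ) ^ 2 + (Real.cos (h * β) : ℂ) ^ 2 = 1 := by
    exact_mod_cast Real.sin_sq_add_cos_sq (h * β)
  rw [hexp, ha, hb]
  rw [Complex.ofReal_div, Complex.ofReal_div]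
  push_cast [-Complex.ofReal_sin, -Complex.ofReal_cos]
  set s := (Real.sin (h * β) : ℂ)
  set c := (Real.cos (h * β) : ℂ)
  have hI : I ≠ 0 := Complex.I_ne_zero
  have hI2 : I ^ 2 = -1 := Complex.I_sq
  field_simp
  linear_combination ((β:ℂ)) * hpyth
    + ((β:ℂ) * (1 - c - s^2)) * hI2
end

section
/- Let h > 0, p ≥ 0, and a, b ∈ ℝ with a + b·h > 0. Set J = 2·∫_0^h |a + b·u| du + 2p/(a + b·h). Then: (i) if a ≥ 0, J < 2 if and only if p < (a + b·h)·(1 − a·h − b·h²/2); (ii) if a < 0 (so b > 0), J < 2 if and only if p < (a + b·h)·(1 − a·h − b·h²/2 − a²/b). -/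
open intervalIntegral

lemma lin_int (a b x y : ℝ) : (∫ u in x..y, (a + b*u)) = a*(y-x) + b*(y^2-x^2)/2 := by
  have h1 : IntervalIntegrable (fun _ : ℝ => a) MeasureTheory.volume x y := intervalIntegrable_const
  have h2 : IntervalIntegrable (fun u : ℝ => b * u) MeasureTheory.volume x y :=
    (intervalIntegral.intervalIntegrable_id).const_mul b
  rw [intervalIntegral.integral_add h1 h2, intervalIntegral.integral_const,
    intervalIntegral.integral_const_mul, integral_id]
  simp [smul_eq_mul]; ring

lemma final_iff (p c I J : ℝ) (hc : 0 < c) (hJ : J = 2*I + 2*p/c) :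
    J < 2 ↔ p < c*(1-I) := by
  rw [hJ]
  constructor
  · intro H
    have h2 : 2*p/c < 2 - 2*I := by linarith
    rw [div_lt_iff₀ hc] at h2
    nlinarith
  · intro H
    have h2 : 2*p < (2-2*I)*c := by nlinarith
    have := (div_lt_iff₀ hc).2 h2
    linarith

theorem condition_4_8_piecewise
    (h p a b : ℝ) (hh : 0 < h) (hp : 0 ≤ p) (hab : 0 < a + b * h)
    (J : ℝ)
    (hJ : J = 2 * (∫ u in (0:ℝ)..h, |a + b * u|) + 2 * p / (a + b * h)) :
    (0 ≤ a → (J < 2 ↔ p < (a + b * h) * (1 - a * h - b * h ^ 2 / 2))) ∧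
    (a < 0 → (J < 2 ↔ p < (a + b * h) * (1 - a * h - b * h ^ 2 / 2 - a ^ 2 / b))) := by
  constructor
  · intro ha
    have hI : (∫ u in (0:ℝ)..h, |a + b * u|) = a*h + b*h^2/2 := by
      rw [intervalIntegral.integral_congr (g := fun u => a + b*u)
        (fun u hu => ?_), lin_int]
      · ring
      · simp only
        rw [Set.uIcc_of_le hh.le] at hu
        obtain ⟨hu1, hu2⟩ := hu
        rw [abs_of_nonneg]
        nlinarith [mul_nonneg (sub_nonneg.2 hu2) ha, mul_nonneg hu1 hab.le]
    rw [hJ, hI]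
    have := final_iff p (a+b*h) (a*h + b*h^2/2) (2*(a*h + b*h^2/2) + 2*p/(a+b*h)) hab rfl
    rw [this]
    constructor <;> intro H <;> nlinarith
  · intro ha
    have hb : 0 < b := by nlinarith
    set u₀ : ℝ := -a/b with hu₀
    have hu0pos : 0 < u₀ := div_pos (neg_pos.2 ha) hb
    have hu0h : u₀ < h := by
      rw [hu₀, div_lt_iff₀ hb]; nlinarith
    have hcont : Continuous (fun u : ℝ => |a + b*u|) :=
      (continuous_const.add (continuous_const.mul continuous_id)).abs
    have hsplit : (∫ u in (0:ℝ)..h, |a + b * u|) =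
        (∫ u in (0:ℝ)..u₀, |a + b * u|) + (∫ u in u₀..h, |a + b * u|) :=
      (intervalIntegral.integral_add_adjacent_intervals
        (hcont.intervalIntegrable _ _) (hcont.intervalIntegrable _ _)).symm
    have hI1 : (∫ u in (0:ℝ)..u₀, |a + b * u|) = (-a)*(u₀-0) + (-b)*(u₀^2-0^2)/2 := by
      rw [intervalIntegral.integral_congr (g := fun u => (-a) + (-b)*u)
        (fun u hu => ?_), lin_int]
      simp only
      rw [Set.uIcc_of_le hu0pos.le] at hu
      obtain ⟨hu1, hu2⟩ := hu
      rw [abs_of_nonpos]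
      · ring
      · have : b*u ≤ b*u₀ := mul_le_mul_of_nonneg_left hu2 hb.le
        rw [hu₀] at this
        have hbu : b * (-a/b) = -a := by field_simp
        linarith [hbu ▸ this]
    have hI2 : (∫ u in u₀..h, |a + b * u|) = a*(h-u₀) + b*(h^2-u₀^2)/2 := by
      rw [intervalIntegral.integral_congr (g := fun u => a + b*u)
        (fun u hu => ?_), lin_int]
      simp only
      rw [Set.uIcc_of_le hu0h.le] at hu
      obtain ⟨hu1, hu2⟩ := hu
      rw [abs_of_nonneg]
      have : b*u₀ ≤ b*u := mul_le_mul_of_nonneg_left hu1 hb.le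
      have hbu : b * (-a/b) = -a := by field_simp
      rw [hu₀] at this
      linarith [hbu ▸ this]
    have hI : (∫ u in (0:ℝ)..h, |a + b * u|) = a*h + b*h^2/2 + a^2/b := by
      rw [hsplit, hI1, hI2, hu₀]
      field_simp
      ring
    rw [hJ, hI]
    have := final_iff p (a+b*h) (a*h + b*h^2/2 + a^2/b)
      (2*(a*h + b*h^2/2 + a^2/b) + 2*p/(a+b*h)) hab rfl
    rw [this]
    constructor <;> intro H <;> nlinarith
end
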